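/- Under the same hypotheses, for pairwise distinct u, v, u', v' one has |⟨ξ(u,v), ξ(u',v')⟩| ≤ 4m'²χ/(m' − χ)² ≤ 16χ. -/

import Mathlib

/-- Under the hypotheses `‖η(v)‖² = m'` and `|⟨η(u),η(v)⟩| ≤ χ ≤ m'/4` for
distinct vertices, for pairwise distinct `u, v, u', v'` one has
`|⟨ξ(u,v), ξ(u',v')⟩| ≤ 4m'²χ/(m' − χ)² ≤ 16χ`. -/
theorem abs_inner_xi_xi_disjoint_le {V : Type*} {E : Type*}
    [NormedAddCommGroup E] [InnerProductSpace ℝ E]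
    (m' χ : ℝ) (hm : 0 < m') (hχ : χ ≤ m' / 4)
    (η : V → E) (hnorm : ∀ v, ‖η v‖ ^ 2 = m')
    (hcross : ∀ u v : V, u ≠ v → |(inner ℝ (η u) (η v) : ℝ)| ≤ χ)
    (ξ : V → V → E)
    (hξ : ∀ u v : V, u ≠ v →
      ξ u v = (m' / (m' + (inner ℝ (η u) (η v) : ℝ))) • (η u + η v))
    (u v u' v' : V) (h1 : u ≠ v) (h2 : u' ≠ v') (h3 : u ≠ u') (h4 : u ≠ v')
    (h5 : v ≠ u') (h6 : v ≠ v') :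
    |(inner ℝ (ξ u v) (ξ u' v') : ℝ)| ≤ 4 * m' ^ 2 * χ / (m' - χ) ^ 2 ∧
      4 * m' ^ 2 * χ / (m' - χ) ^ 2 ≤ 16 * χ := by
  have hχ0 : 0 ≤ χ := le_trans (abs_nonneg _) (hcross u v h1)
  have hmχ : 0 < m' - χ := by linarith
  set A : ℝ := inner ℝ (η u) (η v) with hAdef
  set B : ℝ := inner ℝ (η u') (η v') with hBdef
  have hA : |A| ≤ χ := hcross u v h1
  have hB : |B| ≤ χ := hcross u' v' h2
  have hA' : m' - χ ≤ m' + A := by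
    have := abs_le.mp hA; linarith [this.1]
  have hB' : m' - χ ≤ m' + B := by
    have := abs_le.mp hB; linarith [this.1]
  have hApos : 0 < m' + A := lt_of_lt_of_le hmχ hA'
  have hBpos : 0 < m' + B := lt_of_lt_of_le hmχ hB'
  set a : ℝ := inner ℝ (η u) (η u')
  set b : ℝ := inner ℝ (η u) (η v')
  set c : ℝ := inner ℝ (η v) (η u')
  set d : ℝ := inner ℝ (η v) (η v')
  have ha : |a| ≤ χ := hcross u u' h3
  have hb : |b| ≤ χ := hcross u v' h4
  have hc : |c| ≤ χ := hcross v u' h5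
  have hd : |d| ≤ χ := hcross v v' h6
  have hexp : (inner ℝ (ξ u v) (ξ u' v') : ℝ)
      = (m' / (m' + A)) * (m' / (m' + B)) * (a + b + c + d) := by
    rw [hξ u v h1, hξ u' v' h2, real_inner_smul_left, real_inner_smul_right,
      inner_add_left, inner_add_right, inner_add_right]
    simp only [← hAdef, ← hBdef]
    ring
  have hc1 : m' / (m' + A) ≤ m' / (m' - χ) :=
    div_le_div_of_nonneg_left hm.le hmχ hA'
  have hc2 : m' / (m' + B) ≤ m' / (m' - χ) :=
    div_le_div_of_nonneg_left hm.le hmχ hB'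
  have hc1pos : 0 < m' / (m' + A) := div_pos hm hApos
  have hc2pos : 0 < m' / (m' + B) := div_pos hm hBpos
  constructor
  · rw [hexp, abs_mul, abs_mul, abs_of_pos hc1pos, abs_of_pos hc2pos]
    have hsum : |a + b + c + d| ≤ 4 * χ := by
      calc |a + b + c + d| ≤ |a| + |b| + |c| + |d| := by
            have := abs_add_le (a + b + c) d
            have := abs_add_le (a + b) c
            have := abs_add_le a b
            linarith [abs_add_le (a + b + c) d, abs_add_le (a + b) c, abs_add_le a b]
        _ ≤ 4 * χ := by linarith
    have key : m' / (m' + A) * (m' / (m' + B)) * |a + b + c + d|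
        ≤ (m' / (m' - χ)) * (m' / (m' - χ)) * (4 * χ) := by
      apply mul_le_mul
      · exact mul_le_mul hc1 hc2 hc2pos.le (by positivity)
      · exact hsum
      · exact abs_nonneg _
      · positivity
    refine key.trans (le_of_eq ?_)
    field_simp
  · rw [div_le_iff₀ (by positivity)]
    nlinarith [sq_nonneg (m' - 2 * χ), mul_nonneg hχ0 (sq_nonneg (m' - 2*χ))]
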